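/- arXiv:2204.04033 — 3 statements merged into one kernel-verified Lean document; each statement's English description precedes it below -/
import Mathlib

section
/- For every ν ≥ 0, the function φ ↦ f(φ|ν) integrates to 1 over [−π, π]: ∫_{−π}^{π} f(φ|ν) dφ = 1. -/
open Real MeasureTheory Filter

/-- The Gaussian Q-function `Q(x) = ∫_x^∞ (2π)^{-1/2} e^{-t²/2} dt`. -/
noncomputable def gaussQ (x : ℝ) : ℝ :=
  ∫ t in Set.Ioi x, (Real.sqrt (2 * Real.pi))⁻¹ * Real.exp (-t ^ 2 / 2)

/-- The conditional phase density `f(φ|ν)`. -/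
noncomputable def phaseDensity (ν φ : ℝ) : ℝ :=
  Real.exp (-ν) / (2 * Real.pi) +
    Real.sqrt ν * Real.cos φ * Real.exp (-ν * Real.sin φ ^ 2) / Real.sqrt Real.pi *
      (1 - gaussQ (Real.sqrt (2 * ν) * Real.cos φ))

/-- The phase quantization probability function `W_y^{(K)}(ν,θ)`. -/
noncomputable def Wq (K : ℕ) (ν θ : ℝ) (y : ℕ) : ℝ :=
  ∫ φ in (2 * Real.pi / K * y - Real.pi - θ)..(2 * Real.pi / K * (y + 1) - Real.pi - θ),
    phaseDensity ν φ

/-- The phase quantization entropy `w_K(ν,θ)` (base-2 logs; `0 · log₂ 0 = 0` since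
`Real.logb 2 0 = 0`). -/
noncomputable def wEnt (K : ℕ) (ν θ : ℝ) : ℝ :=
  -∑ y ∈ Finset.range K, Wq K ν θ y * Real.logb 2 (Wq K ν θ y)

/-- The capacity `C_φ(s,ν)` of a Gaussian channel with `2s`-sector phase quantization. -/
noncomputable def Cphi (s : ℕ) (ν : ℝ) : ℝ :=
  if 1 ≤ s then Real.logb 2 (2 * s) - wEnt (2 * s) ν (Real.pi / (2 * s)) else 0

namespace PhaseAux

open Set

lemma shift_Ioi (a c : ℝ) (g : ℝ → ℝ) :
    ∫ x in Ioi c, g (x - a) = ∫ x in Ioi (c - a), g x := by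
  have h1 : MeasurePreserving (fun x : ℝ => x + -a) volume volume :=
    measurePreserving_add_right volume (-a)
  have h2 : MeasurableEmbedding (fun x : ℝ => x + -a) :=
    (measurableEmbedding_addRight (-a))
  have := h1.setIntegral_preimage_emb h2 g (Ioi (c - a))
  have hs : (fun x : ℝ => x + -a) ⁻¹' Ioi (c - a) = Ioi c := by
    ext x; simp [sub_eq_add_neg]
  rw [hs] at this
  simpa [sub_eq_add_neg] using this

lemma gauss_eq (t : ℝ) : Real.exp (-t ^ 2 / 2) = Real.exp (-(1/2 : ℝ) * t ^ 2) := by ring_nf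

lemma integrable_gauss : Integrable (fun t : ℝ => Real.exp (-t ^ 2 / 2)) := by
  simpa [gauss_eq] using integrable_exp_neg_mul_sq (by norm_num : (0:ℝ) < 1/2)

lemma integrable_mul_gauss : Integrable (fun t : ℝ => t * Real.exp (-t ^ 2 / 2)) := by
  simpa [gauss_eq] using integrable_mul_exp_neg_mul_sq (by norm_num : (0:ℝ) < 1/2)

lemma integral_gauss_total : ∫ t : ℝ, Real.exp (-t ^ 2 / 2) = Real.sqrt (2 * Real.pi) := by
  simp_rw [gauss_eq]
  rw [integral_gaussian]
  rw [show Real.pi / (1/2) = 2 * Real.pi by ring]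

lemma sqrt_two_pi_pos : (0:ℝ) < Real.sqrt (2 * Real.pi) :=
  Real.sqrt_pos.2 (by positivity)

lemma gaussQ_eq (x : ℝ) :
    gaussQ x = (Real.sqrt (2 * Real.pi))⁻¹ * ∫ t in Set.Ioi x, Real.exp (-t ^ 2 / 2) := by
  rw [gaussQ, integral_const_mul]

lemma integral_gauss_Ioi (x : ℝ) :
    ∫ t in Set.Ioi x, Real.exp (-t ^ 2 / 2) = Real.sqrt (2 * Real.pi) * gaussQ x := by
  rw [gaussQ_eq, ← mul_assoc, mul_inv_cancel₀ sqrt_two_pi_pos.ne', one_mul]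

lemma gaussQ_neg (a : ℝ) : gaussQ (-a) = 1 - gaussQ a := by
  have h1 : ∫ t in Set.Iic (-a), Real.exp (-t ^ 2 / 2)
      = ∫ t in Set.Ioi a, Real.exp (-t ^ 2 / 2) := by
    rw [← integral_comp_neg_Ioi]
    simp [neg_neg]
  have hsplit : (∫ t in Set.Iic (-a), Real.exp (-t ^ 2 / 2))
      + ∫ t in Set.Ioi (-a), Real.exp (-t ^ 2 / 2) = Real.sqrt (2 * Real.pi) := by
    rw [← integral_gauss_total]
    rw [← setIntegral_union (Set.Iic_disjoint_Ioi le_rfl) measurableSet_Ioi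
      integrable_gauss.integrableOn integrable_gauss.integrableOn, Set.Iic_union_Ioi,
      setIntegral_univ]
  rw [gaussQ_eq, gaussQ_eq]
  have h2 : (∫ t in Set.Ioi (-a), Real.exp (-t ^ 2 / 2))
      = Real.sqrt (2 * Real.pi) - ∫ t in Set.Ioi a, Real.exp (-t ^ 2 / 2) := by
    linarith [hsplit, h1]
  rw [h2, mul_sub, inv_mul_cancel₀ sqrt_two_pi_pos.ne']

lemma integral_id_gauss_Ioi (c : ℝ) :
    ∫ u in Ioi c, u * Real.exp (-u ^ 2 / 2) = Real.exp (-c ^ 2 / 2) := by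
  have hd : ∀ u ∈ Ici c, HasDerivAt (fun u : ℝ => -Real.exp (-u ^ 2 / 2))
      (u * Real.exp (-u ^ 2 / 2)) u := by
    intro u _
    have h1 : HasDerivAt (fun u : ℝ => -u ^ 2 / 2) (-u) u := by
      have := ((hasDerivAt_pow 2 u).neg).div_const 2
      simpa using this.congr_deriv (by push_cast; ring)
    have := (h1.exp).neg
    convert this using 1
    case e'_8 => rfl
    case e'_9 => ring
    case e'_4 => rfl
    case e'_5 => rfl
  have htend : Tendsto (fun u : ℝ => -Real.exp (-u ^ 2 / 2)) atTop (nhds 0) := by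
    rw [← neg_zero]
    refine Tendsto.neg ?_
    apply Real.tendsto_exp_atBot.comp
    have : Tendsto (fun u : ℝ => u ^ 2 / 2) atTop atTop :=
      (tendsto_pow_atTop two_ne_zero).atTop_div_const (by norm_num)
    have h2 : Tendsto (fun u : ℝ => -(u ^ 2 / 2)) atTop atBot :=
      tendsto_neg_atTop_atBot.comp this
    simpa [neg_div] using h2
  have := integral_Ioi_of_hasDerivAt_of_tendsto' hd integrable_mul_gauss.integrableOn htend
  simpa using this

/-- The key 1D computation: `∫_0^∞ r e^{-(r-a)²/2} dr = e^{-a²/2} + a √(2π) (1 - Q(a))`. -/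
lemma integral_rice (a : ℝ) :
    ∫ r in Ioi (0:ℝ), r * Real.exp (-(r - a) ^ 2 / 2)
      = Real.exp (-a ^ 2 / 2) + a * Real.sqrt (2 * Real.pi) * (1 - gaussQ a) := by
  have h0 : (fun r : ℝ => r * Real.exp (-(r - a) ^ 2 / 2))
      = fun r : ℝ => ((r - a) + a) * Real.exp (-(r - a) ^ 2 / 2) := by
    funext r; ring_nf
  rw [h0]
  rw [shift_Ioi a 0 (fun u : ℝ => (u + a) * Real.exp (-u ^ 2 / 2)), zero_sub]
  have hsplit : (fun u : ℝ => (u + a) * Real.exp (-u ^ 2 / 2))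
      = fun u : ℝ => u * Real.exp (-u ^ 2 / 2) + a * Real.exp (-u ^ 2 / 2) := by
    funext u; ring
  rw [hsplit, integral_add integrable_mul_gauss.integrableOn
    (integrable_gauss.const_mul a).integrableOn, integral_id_gauss_Ioi,
    integral_const_mul, integral_gauss_Ioi, gaussQ_neg]
  ring_nf

/-- The inner (radial) integral of the 2D Gaussian in polar coordinates equals the
phase density. -/
lemma slice (ν : ℝ) (hν : 0 ≤ ν) (θ : ℝ) :
    ∫ r in Ioi (0:ℝ), r * ((2 * Real.pi)⁻¹ *
      Real.exp (-((r * Real.cos θ - Real.sqrt (2 * ν)) ^ 2 + (r * Real.sin θ) ^ 2) / 2))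
      = phaseDensity ν θ := by
  set b := Real.sqrt (2 * ν) with hb
  set a := b * Real.cos θ with ha
  have hb2 : b ^ 2 = 2 * ν := Real.sq_sqrt (by linarith)
  have hcs : Real.sin θ ^ 2 + Real.cos θ ^ 2 = 1 := Real.sin_sq_add_cos_sq θ
  have hexp : ∀ r : ℝ, -((r * Real.cos θ - b) ^ 2 + (r * Real.sin θ) ^ 2) / 2
      = -(r - a) ^ 2 / 2 + (-ν * Real.sin θ ^ 2) := by
    intro r
    rw [ha]
    nlinarith [hb2, hcs, sq_nonneg r]
  have h1 : (fun r : ℝ => r * ((2 * Real.pi)⁻¹ *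
      Real.exp (-((r * Real.cos θ - b) ^ 2 + (r * Real.sin θ) ^ 2) / 2)))
      = fun r : ℝ => ((2 * Real.pi)⁻¹ * Real.exp (-ν * Real.sin θ ^ 2)) *
        (r * Real.exp (-(r - a) ^ 2 / 2)) := by
    funext r
    rw [hexp r, Real.exp_add]
    ring
  rw [h1, integral_const_mul, integral_rice]
  -- now pure algebra
  have hpi : (0:ℝ) < Real.pi := Real.pi_pos
  have hsp : Real.sqrt Real.pi * Real.sqrt Real.pi = Real.pi :=
    Real.mul_self_sqrt hpi.le
  have hs2 : Real.sqrt 2 * Real.sqrt 2 = 2 := Real.mul_self_sqrt (by norm_num)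
  have h2p : Real.sqrt (2 * Real.pi) = Real.sqrt 2 * Real.sqrt Real.pi :=
    Real.sqrt_mul (by norm_num) _
  have h2v : b = Real.sqrt 2 * Real.sqrt ν := Real.sqrt_mul (by norm_num) _
  have hterm1 : Real.exp (-ν * Real.sin θ ^ 2) * Real.exp (-a ^ 2 / 2) = Real.exp (-ν) := by
    rw [← Real.exp_add]
    congr 1
    rw [ha]
    nlinarith [hb2, hcs]
  have hsppos : (0:ℝ) < Real.sqrt Real.pi := Real.sqrt_pos.2 hpi
  have key : (2 * Real.pi)⁻¹ * Real.sqrt (2 * Real.pi) * a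
      = Real.sqrt ν * Real.cos θ / Real.sqrt Real.pi := by
    rw [ha, h2p, h2v]
    rw [eq_div_iff hsppos.ne']
    field_simp
    linear_combination (Real.sqrt Real.pi * Real.sqrt Real.pi * Real.sqrt ν * Real.cos θ) * hs2
      + (2 * Real.sqrt ν * Real.cos θ) * hsp
  rw [phaseDensity, ← hb, ← ha]
  linear_combination (2 * Real.pi)⁻¹ * hterm1 +
    (Real.exp (-ν * Real.sin θ ^ 2) * (1 - gaussQ a)) * key

end PhaseAux

/-- For every `ν ≥ 0`, `φ ↦ f(φ|ν)` integrates to 1 over `[-π, π]`. -/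
theorem phaseDensity_integral_eq_one (ν : ℝ) (hν : 0 ≤ ν) :
    ∫ φ in (-Real.pi)..Real.pi, phaseDensity ν φ = 1 := by
  open Set PhaseAux in
  set b := Real.sqrt (2 * ν) with hb
  set f : ℝ × ℝ → ℝ := fun p =>
    (2 * Real.pi)⁻¹ * Real.exp (-((p.1 - b) ^ 2 + p.2 ^ 2) / 2) with hf
  have hfactor : ∀ p : ℝ × ℝ, f p =
      ((Real.sqrt (2 * Real.pi))⁻¹ * Real.exp (-(p.1 - b) ^ 2 / 2)) *
      ((Real.sqrt (2 * Real.pi))⁻¹ * Real.exp (-p.2 ^ 2 / 2)) := by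
    intro p
    have hc : (Real.sqrt (2 * Real.pi))⁻¹ * (Real.sqrt (2 * Real.pi))⁻¹ = (2 * Real.pi)⁻¹ := by
      rw [← mul_inv, Real.mul_self_sqrt (by positivity)]
    have hee : Real.exp (-((p.1 - b) ^ 2 + p.2 ^ 2) / 2)
        = Real.exp (-(p.1 - b) ^ 2 / 2) * Real.exp (-p.2 ^ 2 / 2) := by
      rw [← Real.exp_add]; ring_nf
    simp only [hf]
    rw [hee, ← hc]
    ring
  -- Integrability of f on ℝ²
  have hfint : Integrable f := by
    have h1 : Integrable (fun x : ℝ =>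
        (Real.sqrt (2 * Real.pi))⁻¹ * Real.exp (-(x - b) ^ 2 / 2)) :=
      (integrable_gauss.comp_sub_right b).const_mul _
    have h2 : Integrable (fun x : ℝ =>
        (Real.sqrt (2 * Real.pi))⁻¹ * Real.exp (-x ^ 2 / 2)) :=
      integrable_gauss.const_mul _
    have h3 := h1.mul_prod h2
    rw [← Measure.volume_eq_prod] at h3
    apply h3.congr
    filter_upwards with p
    rw [hfactor p]
  -- Total integral of f is 1
  have hftot : ∫ p : ℝ × ℝ, f p = 1 := by
    have : ∫ p : ℝ × ℝ, f p = (∫ x : ℝ, (Real.sqrt (2 * Real.pi))⁻¹ *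
        Real.exp (-(x - b) ^ 2 / 2)) * ∫ y : ℝ, (Real.sqrt (2 * Real.pi))⁻¹ *
        Real.exp (-y ^ 2 / 2) := by
      simp_rw [hfactor]
      rw [Measure.volume_eq_prod]
      exact integral_prod_mul
        (fun x : ℝ => (Real.sqrt (2 * Real.pi))⁻¹ * Real.exp (-(x - b) ^ 2 / 2))
        (fun y : ℝ => (Real.sqrt (2 * Real.pi))⁻¹ * Real.exp (-y ^ 2 / 2))
    rw [this]
    rw [integral_const_mul, integral_const_mul,
      integral_sub_right_eq_self (fun x : ℝ => Real.exp (-x ^ 2 / 2)) b,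
      integral_gauss_total, inv_mul_cancel₀ sqrt_two_pi_pos.ne']
    norm_num
  -- Polar change of variables
  have hpolar : (∫ p in polarCoord.target, p.1 • f (polarCoord.symm p)) = 1 := by
    rw [integral_comp_polarCoord_symm f, hftot]
  -- Integrability on the polar target
  have hFint : IntegrableOn (fun p : ℝ × ℝ => p.1 • f (polarCoord.symm p))
      polarCoord.target := by
    set B : ℝ × ℝ → ℝ × ℝ →L[ℝ] ℝ × ℝ := fun p =>
      LinearMap.toContinuousLinearMap (Matrix.toLin (Module.Basis.finTwoProd ℝ) (Module.Basis.finTwoProd ℝ)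
        !![Real.cos p.2, -p.1 * Real.sin p.2; Real.sin p.2, p.1 * Real.cos p.2]) with hB
    have hder : ∀ p ∈ polarCoord.target, HasFDerivWithinAt polarCoord.symm (B p)
        polarCoord.target p := fun p _ => (hasFDerivAt_polarCoord_symm p).hasFDerivWithinAt
    have hBdet : ∀ p, (B p).det = p.1 := by
      intro p
      conv_rhs => rw [← one_mul p.1, ← Real.cos_sq_add_sin_sq p.2]
      simp only [hB, neg_mul, LinearMap.det_toContinuousLinearMap, LinearMap.det_toLin,
        Matrix.det_fin_two_of, sub_neg_eq_add]
      ring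
    have hinj : Set.InjOn polarCoord.symm polarCoord.target := polarCoord.symm.injOn
    have himg : polarCoord.symm '' polarCoord.target = polarCoord.source :=
      polarCoord.symm_image_target_eq_source
    have hmeas : MeasurableSet polarCoord.target := polarCoord.open_target.measurableSet
    have hfsrc : IntegrableOn f (polarCoord.symm '' polarCoord.target) := by
      rw [himg]; exact hfint.integrableOn
    have := (integrableOn_image_iff_integrableOn_abs_det_fderiv_smul volume hmeas
      hder hinj f).1 hfsrc
    refine this.congr_fun (fun p hp => ?_) hmeas
    beta_reduce
    rw [hBdet, abs_of_pos hp.1]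
  -- Fubini on the product set
  have htarget : polarCoord.target = Ioi (0:ℝ) ×ˢ Ioo (-Real.pi) Real.pi := rfl
  rw [htarget] at hpolar hFint
  have hswap : ∫ p in Ioi (0:ℝ) ×ˢ Ioo (-Real.pi) Real.pi,
      p.1 • f (polarCoord.symm p)
      = ∫ θ in Ioo (-Real.pi) Real.pi, ∫ r in Ioi (0:ℝ),
          (r, θ).1 • f (polarCoord.symm (r, θ)) := by
    rw [Measure.volume_eq_prod, ← Measure.prod_restrict]
    rw [IntegrableOn, Measure.volume_eq_prod, ← Measure.prod_restrict] at hFint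
    exact integral_prod_symm _ hFint
  rw [hswap] at hpolar
  have hinner : ∀ θ : ℝ, (∫ r in Ioi (0:ℝ), (r, θ).1 • f (polarCoord.symm (r, θ)))
      = phaseDensity ν θ := by
    intro θ
    rw [← slice ν hν θ]
    apply setIntegral_congr_fun measurableSet_Ioi
    intro r _
    simp only [polarCoord_symm_apply, hf, smul_eq_mul, hb]
  simp_rw [hinner] at hpolar
  rw [intervalIntegral.integral_of_le (by linarith [Real.pi_pos]),
    integral_Ioc_eq_integral_Ioo]
  exact hpolar
end

section
/- For every ν ≥ 0 and every φ ∈ ℝ, f(φ|ν) ≥ 0. -/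
open Real MeasureTheory Filter

/- ### Auxiliary lemmas -/

lemma gauss_integrable :
    Integrable (fun t : ℝ => (Real.sqrt (2 * Real.pi))⁻¹ * Real.exp (-t ^ 2 / 2)) := by
  have h : Integrable (fun t : ℝ => Real.exp (-(1/2 : ℝ) * t ^ 2)) :=
    integrable_exp_neg_mul_sq (by norm_num)
  have := h.const_mul (Real.sqrt (2 * Real.pi))⁻¹
  convert this using 2 with t
  ring_nf

lemma gauss_total : (∫ t : ℝ, (Real.sqrt (2 * Real.pi))⁻¹ * Real.exp (-t ^ 2 / 2)) = 1 := by
  have h : (∫ t : ℝ, Real.exp (-(1/2 : ℝ) * t ^ 2)) = Real.sqrt (Real.pi / (1/2)) :=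
    integral_gaussian (1/2)
  have h2 : (∫ t : ℝ, (Real.sqrt (2 * Real.pi))⁻¹ * Real.exp (-t ^ 2 / 2))
      = (Real.sqrt (2 * Real.pi))⁻¹ * ∫ t : ℝ, Real.exp (-(1/2 : ℝ) * t ^ 2) := by
    rw [MeasureTheory.integral_const_mul]
    congr 1
    apply integral_congr_ae
    filter_upwards with t
    ring_nf
  rw [h2, h]
  have : Real.pi / (1/2) = 2 * Real.pi := by ring
  rw [this, inv_mul_cancel₀]
  positivity

lemma gaussQ_nonneg (x : ℝ) : 0 ≤ gaussQ x := by
  apply setIntegral_nonneg measurableSet_Ioi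
  intro t _
  positivity

lemma gaussQ_le_one (x : ℝ) : gaussQ x ≤ 1 := by
  rw [← gauss_total]
  apply setIntegral_le_integral gauss_integrable
  filter_upwards with t
  positivity

lemma one_sub_gaussQ (x : ℝ) : 1 - gaussQ x = gaussQ (-x) := by
  have key : gaussQ (-x) + gaussQ x = 1 := by
    have h1 : gaussQ (-x)
        = ∫ t in Set.Iic x, (Real.sqrt (2 * Real.pi))⁻¹ * Real.exp (-t ^ 2 / 2) := by
      have := integral_comp_neg_Ioi (-x)
        (fun t => (Real.sqrt (2 * Real.pi))⁻¹ * Real.exp (-t ^ 2 / 2))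
      rw [neg_neg] at this
      rw [gaussQ, ← this]
      apply setIntegral_congr_fun measurableSet_Ioi
      intro t _
      simp only
      norm_num [neg_pow]
    rw [h1, gaussQ, ← gauss_total]
    exact intervalIntegral.integral_Iic_add_Ioi gauss_integrable.integrableOn
      gauss_integrable.integrableOn
  linarith

lemma integral_t_exp (a : ℝ) (ha : 0 < a) :
    ∫ t in Set.Ioi a, t * Real.exp (-t ^ 2 / 2) = Real.exp (-a ^ 2 / 2) := by
  have hderiv : ∀ x ∈ Set.Ici a, HasDerivAt (fun t : ℝ => -Real.exp (-t ^ 2 / 2))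
      (x * Real.exp (-x ^ 2 / 2)) x := by
    intro x _
    have h1 : HasDerivAt (fun t : ℝ => -t ^ 2 / 2) (-x) x := by
      have := ((hasDerivAt_pow 2 x).neg).div_const 2
      exact this.congr_deriv (by push_cast; ring)
    have := (h1.exp).neg
    exact this.congr_deriv (by ring)
  have htend : Tendsto (fun t : ℝ => -Real.exp (-t ^ 2 / 2)) atTop (nhds 0) := by
    rw [show (0:ℝ) = -0 by ring]
    apply Tendsto.neg
    apply Real.tendsto_exp_atBot.comp
    apply Tendsto.atBot_div_const (by norm_num : (0:ℝ) < 2)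
    exact tendsto_neg_atBot_iff.mpr (tendsto_pow_atTop (by norm_num) |>.comp tendsto_id)
  have hnn : ∀ x ∈ Set.Ioi a, 0 ≤ x * Real.exp (-x ^ 2 / 2) := by
    intro x hx
    have : 0 < x := lt_trans ha hx
    positivity
  have := integral_Ioi_of_hasDerivAt_of_nonneg' hderiv hnn htend
  rw [this]; ring

lemma t_exp_integrable : Integrable (fun t : ℝ => t * Real.exp (-t ^ 2 / 2)) := by
  have := integrable_mul_exp_neg_mul_sq (b := 1/2) (by norm_num)
  apply this.congr
  filter_upwards with t
  ring_nf

lemma gaussQ_mill (a : ℝ) (ha : 0 < a) :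
    gaussQ a ≤ (Real.sqrt (2 * Real.pi))⁻¹ * Real.exp (-a ^ 2 / 2) / a := by
  have hmono : gaussQ a ≤ ∫ t in Set.Ioi a,
      ((Real.sqrt (2 * Real.pi))⁻¹ / a) * (t * Real.exp (-t ^ 2 / 2)) := by
    apply setIntegral_mono_on gauss_integrable.integrableOn
      ((t_exp_integrable.const_mul _).integrableOn) measurableSet_Ioi
    intro t ht
    rw [Set.mem_Ioi] at ht
    have hta : a ≤ t := ht.le
    have h1 : (1:ℝ) ≤ t / a := (one_le_div ha).mpr hta
    have hs : 0 < Real.sqrt (2 * Real.pi) := Real.sqrt_pos.mpr (by positivity)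
    calc (Real.sqrt (2 * Real.pi))⁻¹ * Real.exp (-t ^ 2 / 2)
        = (Real.sqrt (2 * Real.pi))⁻¹ * 1 * Real.exp (-t ^ 2 / 2) := by ring
      _ ≤ (Real.sqrt (2 * Real.pi))⁻¹ * (t / a) * Real.exp (-t ^ 2 / 2) := by
          apply mul_le_mul_of_nonneg_right _ (Real.exp_nonneg _)
          exact mul_le_mul_of_nonneg_left h1 (by positivity)
      _ = (Real.sqrt (2 * Real.pi))⁻¹ / a * (t * Real.exp (-t ^ 2 / 2)) := by ring
  rw [MeasureTheory.integral_const_mul, integral_t_exp a ha] at hmono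
  calc gaussQ a ≤ (Real.sqrt (2 * Real.pi))⁻¹ / a * Real.exp (-a ^ 2 / 2) := hmono
    _ = (Real.sqrt (2 * Real.pi))⁻¹ * Real.exp (-a ^ 2 / 2) / a := by ring

lemma mill_algebra (ν : ℝ) (hν : 0 < ν) (φ : ℝ) (hc : Real.cos φ < 0) :
    Real.sqrt ν * (-Real.cos φ) * Real.exp (-ν * Real.sin φ ^ 2) / Real.sqrt Real.pi *
      ((Real.sqrt (2 * Real.pi))⁻¹ * Real.exp (-(Real.sqrt (2 * ν) * (-Real.cos φ)) ^ 2 / 2) /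
        (Real.sqrt (2 * ν) * (-Real.cos φ))) = Real.exp (-ν) / (2 * Real.pi) := by
  have hE : Real.exp (-ν * Real.sin φ ^ 2) *
      Real.exp (-(Real.sqrt (2 * ν) * (-Real.cos φ)) ^ 2 / 2) = Real.exp (-ν) := by
    rw [← Real.exp_add]
    congr 1
    have h2ν : (Real.sqrt (2 * ν)) ^ 2 = 2 * ν := Real.sq_sqrt (by linarith)
    have hsc := Real.sin_sq_add_cos_sq φ
    rw [mul_pow, h2ν]
    linear_combination (-ν : ℝ) * hsc
  have hsν : Real.sqrt (2 * ν) = Real.sqrt 2 * Real.sqrt ν := Real.sqrt_mul (by norm_num) ν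
  have hsπ : Real.sqrt (2 * Real.pi) = Real.sqrt 2 * Real.sqrt Real.pi :=
    Real.sqrt_mul (by norm_num) _
  have h2 : Real.sqrt 2 * Real.sqrt 2 = 2 := Real.mul_self_sqrt (by norm_num)
  have hπ : Real.sqrt Real.pi * Real.sqrt Real.pi = Real.pi := Real.mul_self_sqrt Real.pi_pos.le
  have hνs : 0 < Real.sqrt ν := Real.sqrt_pos.mpr hν
  have hπs : 0 < Real.sqrt Real.pi := Real.sqrt_pos.mpr Real.pi_pos
  have h2s : 0 < Real.sqrt 2 := Real.sqrt_pos.mpr (by norm_num)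
  have hcc : 0 < -Real.cos φ := by linarith
  rw [← hE, hsν, hsπ]
  have hπ0 : Real.sqrt Real.pi ≠ 0 := ne_of_gt hπs
  have h20 : Real.sqrt 2 ≠ 0 := ne_of_gt h2s
  have hν0 : Real.sqrt ν ≠ 0 := ne_of_gt hνs
  have hc0 : -Real.cos φ ≠ 0 := ne_of_gt hcc
  have hπ2 : Real.pi ≠ 0 := ne_of_gt Real.pi_pos
  field_simp
  ring_nf
  rw [Real.sq_sqrt (by norm_num : (0:ℝ) ≤ 2), Real.sq_sqrt Real.pi_pos.le]
  have hc0' : Real.cos φ ≠ 0 := ne_of_lt hc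
  field_simp

/-- For every `ν ≥ 0` and every `φ ∈ ℝ`, `f(φ|ν) ≥ 0`. -/
theorem phaseDensity_nonneg (ν : ℝ) (hν : 0 ≤ ν) (φ : ℝ) :
    0 ≤ phaseDensity ν φ := by
  unfold phaseDensity
  rcases le_or_gt 0 (Real.cos φ) with hcpos | hc
  · have h2 : gaussQ (Real.sqrt (2 * ν) * Real.cos φ) ≤ 1 := gaussQ_le_one _
    have h3 : 0 ≤ Real.sqrt ν * Real.cos φ * Real.exp (-ν * Real.sin φ ^ 2) / Real.sqrt Real.pi := by
      positivity
    have h4 : 0 ≤ 1 - gaussQ (Real.sqrt (2 * ν) * Real.cos φ) := by linarith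
    have h5 := mul_nonneg h3 h4
    have h6 : 0 < Real.exp (-ν) / (2 * Real.pi) := by positivity
    linarith
  · rcases eq_or_lt_of_le hν with h0 | hν'
    · rw [← h0]
      simp
      positivity
    · have key : 1 - gaussQ (Real.sqrt (2 * ν) * Real.cos φ)
          = gaussQ (Real.sqrt (2 * ν) * (-Real.cos φ)) := by
        rw [one_sub_gaussQ]
        congr 1
        ring
      rw [key]
      have ha : 0 < Real.sqrt (2 * ν) * (-Real.cos φ) := by
        apply mul_pos (Real.sqrt_pos.mpr (by linarith))
        linarith
      have hQle := gaussQ_mill _ ha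
      have hQ0 := gaussQ_nonneg (Real.sqrt (2 * ν) * (-Real.cos φ))
      have hfac : 0 ≤ Real.sqrt ν * (-Real.cos φ) * Real.exp (-ν * Real.sin φ ^ 2) /
          Real.sqrt Real.pi := by
        have : 0 < -Real.cos φ := by linarith
        positivity
      have hb := mul_le_mul_of_nonneg_left hQle hfac
      rw [mill_algebra ν hν' φ hc] at hb
      have hrw : Real.sqrt ν * Real.cos φ * Real.exp (-ν * Real.sin φ ^ 2) / Real.sqrt Real.pi *
            gaussQ (Real.sqrt (2 * ν) * (-Real.cos φ))
          = -(Real.sqrt ν * (-Real.cos φ) * Real.exp (-ν * Real.sin φ ^ 2) / Real.sqrt Real.pi *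
            gaussQ (Real.sqrt (2 * ν) * (-Real.cos φ))) := by ring
      rw [hrw]
      linarith
end

section
/- For every ν ≥ 0 and every φ ∈ ℝ, the radial integral of the bivariate Gaussian density of a unit-SNR-normalized noncentral complex Gaussian equals the phase density: ∫_0^∞ (r/π) · exp(−((r·cos φ − √ν)² + (r·sin φ)²)) dr = f(φ|ν). In other words, f(·|ν) is the probability density of the phase of √ν + Z, where Z is a circularly symmetric complex Gaussian with density (1/π)e^{−|z|²}. -/
open Real MeasureTheory Filter

lemma shiftIoi (f : ℝ → ℝ) (c d : ℝ) :
    ∫ x in Set.Ioi c, f (x + d) = ∫ x in Set.Ioi (c + d), f x := by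
  rw [← integral_indicator measurableSet_Ioi, ← integral_indicator measurableSet_Ioi,
    ← integral_add_right_eq_self ((Set.Ioi (c + d)).indicator f) d]
  congr 1; ext x
  have hiff : c + d < x + d ↔ c < x := by constructor <;> intro <;> linarith
  by_cases h : c < x
  · simp [Set.indicator, h, hiff.mpr h]
  · simp [Set.indicator, h, fun hh => h (hiff.mp hh)]

lemma intA (c : ℝ) : ∫ x in Set.Ioi c, x * Real.exp (-x ^ 2) = Real.exp (-c ^ 2) / 2 := by
  have h : ∀ x ∈ Set.Ici c, HasDerivAt (fun x : ℝ => -Real.exp (-x ^ 2) / 2)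
      (x * Real.exp (-x ^ 2)) x := by
    intro x _
    have : HasDerivAt (fun x : ℝ => -x ^ 2) (-(2 * x)) x := by
      simpa using ((hasDerivAt_pow 2 x).fun_neg)
    have := (this.exp).fun_neg.div_const 2
    refine this.congr_deriv ?_
    ring
  have htend : Tendsto (fun x : ℝ => -Real.exp (-x ^ 2) / 2) atTop (nhds 0) := by
    have h1 : Tendsto (fun x : ℝ => -x ^ 2) atTop atBot := by
      apply tendsto_neg_atBot_iff.mpr; exact tendsto_pow_atTop (by norm_num)
    simpa using ((Real.tendsto_exp_atBot.comp h1).neg.div_const 2)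
  have := integral_Ioi_of_hasDerivAt_of_tendsto' h ?_ htend
  · rw [this]; ring
  · have : IntegrableOn (fun x => x * Real.exp (-1 * x ^ 2)) (Set.Ioi c) :=
      (integrable_mul_exp_neg_mul_sq one_pos).integrableOn
    simpa using this

lemma intB (a : ℝ) : ∫ x in Set.Ioi a, Real.exp (-x ^ 2) = Real.sqrt π * gaussQ (Real.sqrt 2 * a) := by
  have h2 : (0:ℝ) < Real.sqrt 2 := Real.sqrt_pos.mpr two_pos
  have h := integral_comp_mul_left_Ioi
    (fun t => (Real.sqrt (2 * π))⁻¹ * Real.exp (-t ^ 2 / 2)) a h2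
  have key : ∀ x : ℝ, (Real.sqrt (2 * π))⁻¹ * Real.exp (-(Real.sqrt 2 * x) ^ 2 / 2)
      = (Real.sqrt (2 * π))⁻¹ * Real.exp (-x ^ 2) := by
    intro x
    congr 1
    rw [mul_pow, Real.sq_sqrt (by norm_num : (0:ℝ) ≤ 2)]
    ring_nf
  simp_rw [key] at h
  rw [integral_const_mul] at h
  rw [smul_eq_mul] at h
  rw [gaussQ]
  set Q := ∫ t in Set.Ioi (Real.sqrt 2 * a), (Real.sqrt (2 * π))⁻¹ * Real.exp (-t ^ 2 / 2) with hQ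
  have h2π : Real.sqrt (2 * π) = Real.sqrt 2 * Real.sqrt π := Real.sqrt_mul (by norm_num) π
  have hπ : (0:ℝ) < Real.sqrt π := Real.sqrt_pos.mpr Real.pi_pos
  have hpos : (0:ℝ) < Real.sqrt (2 * π) := by rw [h2π]; positivity
  field_simp at h
  apply mul_right_cancel₀ (ne_of_gt h2)
  rw [h, h2π]; ring

lemma intC (a : ℝ) : ∫ x in Set.Ioi (-a), Real.exp (-x ^ 2)
    = Real.sqrt π * (1 - gaussQ (Real.sqrt 2 * a)) := by
  have hint : Integrable (fun x : ℝ => Real.exp (-x ^ 2)) := by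
    have := integrable_exp_neg_mul_sq (one_pos); simpa using this
  have htot : ∫ x : ℝ, Real.exp (-x ^ 2) = Real.sqrt π := by
    have := integral_gaussian 1; simpa using this
  have hIic : ∫ x in Set.Iic (-a), Real.exp (-x ^ 2)
      = Real.sqrt π * gaussQ (Real.sqrt 2 * a) := by
    rw [← intB a, ← integral_comp_neg_Ioi]
    simp
  have hsplit := intervalIntegral.integral_Iic_add_Ioi (b := -a) hint.integrableOn hint.integrableOn
  rw [htot, hIic] at hsplit
  linarith [hsplit]

lemma intJ (a : ℝ) : ∫ r in Set.Ioi (0:ℝ), r * Real.exp (-(r - a) ^ 2)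
    = Real.exp (-a ^ 2) / 2 + a * (Real.sqrt π * (1 - gaussQ (Real.sqrt 2 * a))) := by
  have hshift := shiftIoi (fun r => r * Real.exp (-(r - a) ^ 2)) (-a) a
  simp only [neg_add_cancel, add_sub_cancel_right] at hshift
  rw [← hshift]
  have h1 : Integrable (fun x : ℝ => x * Real.exp (-x ^ 2)) := by
    have := integrable_mul_exp_neg_mul_sq (one_pos); simpa using this
  have h2 : Integrable (fun x : ℝ => a * Real.exp (-x ^ 2)) := by
    have := integrable_exp_neg_mul_sq (one_pos); simpa using this.const_mul a
  have hsplit : ∀ x : ℝ, (x + a) * Real.exp (-x ^ 2)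
      = x * Real.exp (-x ^ 2) + a * Real.exp (-x ^ 2) := fun x => by ring
  simp_rw [hsplit]
  rw [integral_add h1.integrableOn h2.integrableOn, intA, integral_const_mul, intC]
  rw [neg_sq]

/-- the radial integral of the bivariate Gaussian density of the
unit-variance noncentral complex Gaussian `√ν + Z` equals the phase density `f(φ|ν)`. -/
theorem radial_integral_eq_phaseDensity (ν : ℝ) (hν : 0 ≤ ν) (φ : ℝ) :
    ∫ r in Set.Ioi (0 : ℝ),
        (r / Real.pi) *
          Real.exp (-((r * Real.cos φ - Real.sqrt ν) ^ 2 + (r * Real.sin φ) ^ 2)) =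
      phaseDensity ν φ := by
  set a := Real.sqrt ν * Real.cos φ with ha
  have hsq : Real.sqrt ν ^ 2 = ν := Real.sq_sqrt hν
  have h1 := Real.sin_sq_add_cos_sq φ
  have key : ∀ r : ℝ, (r / Real.pi) *
      Real.exp (-((r * Real.cos φ - Real.sqrt ν) ^ 2 + (r * Real.sin φ) ^ 2))
      = (Real.exp (-ν * Real.sin φ ^ 2) / Real.pi) * (r * Real.exp (-(r - a) ^ 2)) := by
    intro r
    have halg : (r * Real.cos φ - Real.sqrt ν) ^ 2 + (r * Real.sin φ) ^ 2
        = (r - a) ^ 2 + ν * Real.sin φ ^ 2 := by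
      rw [ha]; linear_combination (r ^ 2 - Real.sqrt ν ^ 2) * h1 + Real.sin φ ^ 2 * hsq
    rw [halg, neg_add, Real.exp_add]
    ring
  simp_rw [key]
  rw [integral_const_mul, intJ]
  have ha2 : a ^ 2 = ν * Real.cos φ ^ 2 := by rw [ha, mul_pow, hsq]
  have harg : Real.sqrt 2 * a = Real.sqrt (2 * ν) * Real.cos φ := by
    rw [ha, Real.sqrt_mul (by norm_num) ν]; ring
  have hexp : Real.exp (-(ν * Real.sin φ ^ 2)) * Real.exp (-a ^ 2) = Real.exp (-ν) := by
    rw [← Real.exp_add, ha2]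
    congr 1
    linear_combination (-ν) * h1
  have hπ : (0:ℝ) < Real.sqrt π := Real.sqrt_pos.mpr Real.pi_pos
  have hππ : Real.sqrt π * Real.sqrt π = π := Real.mul_self_sqrt Real.pi_pos.le
  rw [phaseDensity, harg]
  rw [← hexp, neg_mul, ha]
  generalize gaussQ (Real.sqrt (2 * ν) * Real.cos φ) = G
  field_simp
  linear_combination (Real.sqrt ν * Real.cos φ * 2 * (1 - G)) * hππ
end
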